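/- On a smooth manifold M of dimension m ≥ 2, every first-order bilinear differential operator of the form Φ(X,Y)^i = a_1·X^m·∂_m Y^i + a_2·X^i·∂_m Y^m + b_1·Y^m·∂_m X^i + b_2·Y^i·∂_m X^m (in every coordinate chart, with fixed real constants a_1, a_2, b_1, b_2) that produces a well-defined vector field Φ(X,Y) for all vector fields X, Y is a constant multiple of the Lie bracket [X,Y]. -/

import Mathlib

open scoped BigOperators

noncomputable section

/-- Points of the model space `ℝ^m`. -/
abbrev Pt (m : ℕ) := Fin m → ℝ
/-- Vector fields (or 1-forms) on `ℝ^m`, given by their components. -/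
abbrev VF (m : ℕ) := Pt m → Fin m → ℝ
/-- (0,2)-tensor fields (or (1,1)-tensor fields) on `ℝ^m`, given by components. -/
abbrev T02 (m : ℕ) := Pt m → Fin m → Fin m → ℝ
/-- (0,3)- or (1,2)-tensor fields on `ℝ^m`, given by components. -/
abbrev T3 (m : ℕ) := Pt m → Fin m → Fin m → Fin m → ℝ

variable {m : ℕ}

/-- `i`-th partial derivative of a scalar function. -/
def pd (i : Fin m) (f : Pt m → ℝ) (x : Pt m) : ℝ :=
  fderiv ℝ f x (Pi.single i 1)

/-- Derivative of a function `f` along a vector field `X`. -/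
def Xdot (X : VF m) (f : Pt m → ℝ) (x : Pt m) : ℝ :=
  ∑ k, X x k * pd k f x

/-- Lie bracket of vector fields, in components. -/
def lieB (X Y : VF m) : VF m := fun x i =>
  ∑ k, (X x k * pd k (fun y => Y y i) x - Y x k * pd k (fun y => X y i) x)

/-- Evaluation `ψ(X)` of a 1-form on a vector field. -/
def ev1 (ψ X : VF m) (x : Pt m) : ℝ := ∑ i, ψ x i * X x i

/-- Exterior derivative of a function, as a 1-form. -/
def dF (f : Pt m → ℝ) : VF m := fun x i => pd i f x

/-- Exterior derivative of a 1-form, as a 2-form: `(dψ)_{ij} = ∂_i ψ_j - ∂_j ψ_i`. -/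
def d2 (ψ : VF m) : T02 m := fun x i j =>
  pd i (fun y => ψ y j) x - pd j (fun y => ψ y i) x

/-- Evaluation of a (0,2)-tensor field on two vector fields. -/
def ev2 (T : T02 m) (X Y : VF m) (x : Pt m) : ℝ :=
  ∑ i, ∑ j, T x i j * X x i * Y x j

/-- Lie derivative of a 1-form `ψ` along `X`, evaluated on `Y`:
`(L_X ψ)(Y) = X·(ψ(Y)) - ψ([X,Y])`. -/
def lie1 (X ψ Y : VF m) (x : Pt m) : ℝ :=
  Xdot X (ev1 ψ Y) x - ev1 ψ (lieB X Y) x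

/-- Lie derivative of a (0,2)-tensor field `T` along `X`, evaluated on `Y, Z`:
`(L_X T)(Y,Z) = X·T(Y,Z) - T([X,Y],Z) - T(Y,[X,Z])`. -/
def lie2 (X : VF m) (T : T02 m) (Y Z : VF m) (x : Pt m) : ℝ :=
  Xdot X (ev2 T Y Z) x - ev2 T (lieB X Y) Z x - ev2 T Y (lieB X Z) x

/-- Application of a (1,1)-tensor field to a vector field: `(φX)^i = φ^i_j X^j`. -/
def appT (φ : T02 m) (X : VF m) : VF m := fun x i => ∑ j, φ x i j * X x j

/-- `(ψ∘₁φ)(X,Y) = ψ(φX,Y)`, in components `(ψ∘₁φ)_{ij} = ψ_{aj} φ^a_i`. -/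
def comp1 (ψ φ : T02 m) : T02 m := fun x i j => ∑ a, ψ x a j * φ x a i

/-- `(ψ∘₂φ)(X,Y) = ψ(X,φY)`, in components `(ψ∘₂φ)_{ij} = ψ_{ia} φ^a_j`. -/
def comp2 (ψ φ : T02 m) : T02 m := fun x i j => ∑ a, ψ x i a * φ x a j

/-- Composition `ψ∘φ` of a 1-form with a (1,1)-tensor field:  `(ψ∘φ)_i = ψ_a φ^a_i`. -/
def compF (ψ : VF m) (φ : T02 m) : VF m := fun x i => ∑ a, ψ x a * φ x a i

/-- Exterior derivative of a 2-form `T`, as a 3-form: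
`(dT)_{ijk} = ∂_i T_{jk} - ∂_j T_{ik} + ∂_k T_{ij}`. -/
def d3 (T : T02 m) : T3 m := fun x i j k =>
  pd i (fun y => T y j k) x - pd j (fun y => T y i k) x + pd k (fun y => T y i j) x

/-- Evaluation of a (0,3)-tensor field on three vector fields. -/
def ev3 (U : T3 m) (X Y Z : VF m) (x : Pt m) : ℝ :=
  ∑ i, ∑ j, ∑ k, U x i j k * X x i * Y x j * Z x k

/-- Pointwise sum of vector fields. -/
def addV (X Y : VF m) : VF m := fun x i => X x i + Y x i

/-- Pointwise multiplication of a vector field by a function. -/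
def smulV (f : Pt m → ℝ) (X : VF m) : VF m := fun x i => f x * X x i

/-- The coordinate expression of the candidate first-order bilinear operator
`Φ(X,Y)^i = a₁·X^k ∂_k Y^i + a₂·X^i ∂_k Y^k + b₁·Y^k ∂_k X^i + b₂·Y^i ∂_k X^k`. -/
def PhiV (a₁ a₂ b₁ b₂ : ℝ) (X Y : VF m) : VF m := fun x i =>
  a₁ * (∑ k, X x k * pd k (fun y => Y y i) x)
  + a₂ * X x i * (∑ k, pd k (fun y => Y y k) x)
  + b₁ * (∑ k, Y x k * pd k (fun y => X y i) x)
  + b₂ * Y x i * (∑ k, pd k (fun y => X y k) x)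

/-- Pushforward of a vector field by a diffeomorphism of `ℝ^m`. -/
def pfwdV (φ : Pt m ≃ Pt m) (X : VF m) : VF m := fun x =>
  fderiv ℝ (⇑φ) (φ.symm x) (X (φ.symm x))

section ThmAux

set_option linter.unusedSectionVars false

variable {m : ℕ} [NeZero m]

lemma hasFDerivAt_proj (i : Fin m) (y : Pt m) :
    HasFDerivAt (fun x : Pt m => x i) (ContinuousLinearMap.proj i : Pt m →L[ℝ] ℝ) y :=
  (ContinuousLinearMap.proj (R := ℝ) (φ := fun _ : Fin m => ℝ) i).hasFDerivAt

lemma contDiff_proj (i : Fin m) : ContDiff ℝ (⊤ : ℕ∞) (fun x : Pt m => x i) :=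
  (ContinuousLinearMap.proj (R := ℝ) (φ := fun _ : Fin m => ℝ) i).contDiff

lemma pd_const (k : Fin m) (c : ℝ) (x : Pt m) : pd k (fun _ => c) x = 0 := by
  simp [pd]

lemma pd_comp0 {g : ℝ → ℝ} {d : ℝ} {x : Pt m} (hg : HasDerivAt g d (x 0)) (k : Fin m) :
    pd k (fun y : Pt m => g (y 0)) x = if k = 0 then d else 0 := by
  have H : HasFDerivAt (fun y : Pt m => g (y 0))
      (d • (ContinuousLinearMap.proj 0 : Pt m →L[ℝ] ℝ)) x := by
    have := hg.comp_hasFDerivAt x (hasFDerivAt_proj 0 x)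
    exact this
  unfold pd
  rw [H.fderiv]
  by_cases hk : k = 0 <;> simp [hk, Pi.single_apply]

/-- the function `t ↦ √(1+t²) = cosh (arsinh t)`. -/
def sq1 (t : ℝ) : ℝ := Real.sqrt (1 + t ^ 2)

lemma sq1_pos (t : ℝ) : 0 < sq1 t := Real.sqrt_pos.mpr (by positivity)

lemma hasDerivAt_sq1 (t : ℝ) : HasDerivAt sq1 (t / sq1 t) t := by
  have h1 : HasDerivAt (fun s : ℝ => 1 + s ^ 2) (2 * t) t := by
    simpa using (hasDerivAt_pow 2 t).const_add 1
  have h2 := (Real.hasDerivAt_sqrt (by positivity : (1:ℝ) + t ^ 2 ≠ 0)).comp t h1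
  refine h2.congr_deriv ?_
  have hs := (sq1_pos t).ne'
  unfold sq1 at *
  ring

/-- sinh on coordinate 0, identity elsewhere. -/
def sF (m : ℕ) [NeZero m] : Pt m ≃ Pt m where
  toFun x i := if i = 0 then Real.sinh (x 0) else x i
  invFun x i := if i = 0 then Real.arsinh (x 0) else x i
  left_inv x := by
    funext i; by_cases h : i = 0 <;> simp [h, Real.arsinh_sinh]
  right_inv x := by
    funext i; by_cases h : i = 0 <;> simp [h, Real.sinh_arsinh]

lemma contDiff_sF : ContDiff ℝ (⊤ : ℕ∞) (⇑(sF m)) := by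
  apply contDiff_pi.mpr
  intro i
  by_cases h : i = 0
  · simp only [sF, Equiv.coe_fn_mk, h, if_true]
    exact Real.contDiff_sinh.comp (contDiff_proj 0)
  · simp only [sF, Equiv.coe_fn_mk, if_neg h]
    exact contDiff_proj i

lemma contDiff_sF_symm : ContDiff ℝ (⊤ : ℕ∞) (⇑(sF m).symm) := by
  apply contDiff_pi.mpr
  intro i
  by_cases h : i = 0
  · simp only [sF, Equiv.coe_fn_symm_mk, h, if_true]
    exact Real.contDiff_arsinh.comp (contDiff_proj 0)
  · simp only [sF, Equiv.coe_fn_symm_mk, if_neg h]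
    exact contDiff_proj i

/-- derivative CLM of `sF` at a point where `cosh` of coordinate 0 equals `c` -/
def sL (m : ℕ) [NeZero m] (c : ℝ) : Pt m →L[ℝ] Pt m :=
  ContinuousLinearMap.pi
    (fun i => if i = 0 then c • ContinuousLinearMap.proj 0 else ContinuousLinearMap.proj i)

lemma sL_apply (c : ℝ) (v : Pt m) (i : Fin m) :
    sL m c v i = if i = 0 then c * v 0 else v i := by
  by_cases h : i = 0 <;> simp [sL, h]

lemma hasFDerivAt_sF (y : Pt m) : HasFDerivAt (⇑(sF m)) (sL m (Real.cosh (y 0))) y := by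
  apply hasFDerivAt_pi'.mpr
  intro i
  have hp : (ContinuousLinearMap.proj i).comp (sL m (Real.cosh (y 0)))
      = if i = 0 then Real.cosh (y 0) • (ContinuousLinearMap.proj 0 : Pt m →L[ℝ] ℝ)
        else ContinuousLinearMap.proj i := by
    by_cases h : i = 0 <;> ext v <;> simp [sL, h]
  rw [hp]
  by_cases h : i = 0
  · subst h
    simp only [if_true, sF, Equiv.coe_fn_mk]
    have := (Real.hasDerivAt_sinh (y 0)).comp_hasFDerivAt y (hasFDerivAt_proj 0 y)
    exact this
  · simp only [if_neg h, sF, Equiv.coe_fn_mk]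
    exact hasFDerivAt_proj i y

lemma pfwd_sF (X : VF m) (x : Pt m) :
    pfwdV (sF m) X x = sL m (Real.cosh (((sF m).symm x) 0)) (X ((sF m).symm x)) := by
  unfold pfwdV
  rw [(hasFDerivAt_sF ((sF m).symm x)).fderiv]

lemma sF_symm_zero (x : Pt m) : ((sF m).symm x) 0 = Real.arsinh (x 0) := by
  simp [sF]

/-- pushforward of the constant field `e₀`. -/
def Sfld (m : ℕ) [NeZero m] : VF m := fun x i => if i = 0 then sq1 (x 0) else 0

lemma pfwd_e0 : pfwdV (sF m) (fun _ => Pi.single 0 1) = Sfld m := by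
  funext x i
  rw [pfwd_sF, sL_apply, sF_symm_zero]
  by_cases h : i = 0
  · simp [h, Sfld, Real.cosh_arsinh, sq1]
  · simp [h, Sfld, Pi.single_apply]

lemma pfwd_e1 (h10 : (1 : Fin m) ≠ 0) :
    pfwdV (sF m) (fun _ => Pi.single 1 1) = fun _ => Pi.single 1 1 := by
  funext x i
  rw [pfwd_sF, sL_apply]
  by_cases h : i = 0
  · simp [h, Pi.single_apply, h10.symm]
  · simp [h, Pi.single_apply]

lemma PhiV_const (a₁ a₂ b₁ b₂ : ℝ) (v w : Fin m → ℝ) :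
    PhiV a₁ a₂ b₁ b₂ (fun _ => v) (fun _ => w) = fun _ _ => 0 := by
  funext x i
  simp [PhiV, pd_const]

lemma pfwd_zero (φ : Pt m ≃ Pt m) (x : Pt m) (i : Fin m) :
    pfwdV φ (fun _ _ => 0) x i = 0 := by
  unfold pfwdV
  have : (fun _ : Fin m => (0:ℝ)) = (0 : Pt m) := rfl
  rw [this, map_zero]
  rfl

lemma pd_Sfld (k i : Fin m) (x : Pt m) :
    pd k (fun y => Sfld m y i) x = if k = 0 ∧ i = 0 then x 0 / sq1 (x 0) else 0 := by
  by_cases hi : i = 0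
  · subst hi
    have he : (fun y : Pt m => Sfld m y 0) = fun y => sq1 (y 0) := by
      funext y; simp [Sfld]
    rw [he, pd_comp0 (hasDerivAt_sq1 (x 0)) k]
    by_cases hk : k = 0 <;> simp [hk]
  · have he : (fun y : Pt m => Sfld m y i) = fun _ => (0:ℝ) := by
      funext y; simp [Sfld, hi]
    rw [he, pd_const]
    simp [hi]

end ThmAux

/-- Theorem 2.1: every bilinear first-order operator of the given coordinate
form which is natural (equivariant under pushforward by all diffeomorphisms of
`ℝ^m`, i.e. produces a well-defined vector field) is a constant multiple of
the Lie bracket. -/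
theorem stmt2 (m : ℕ) (hm : 2 ≤ m) (a₁ a₂ b₁ b₂ : ℝ)
    (hnat : ∀ (φ : Pt m ≃ Pt m), ContDiff ℝ (⊤ : ℕ∞) (⇑φ) →
      ContDiff ℝ (⊤ : ℕ∞) (⇑φ.symm) →
      ∀ X Y : VF m, ContDiff ℝ (⊤ : ℕ∞) X → ContDiff ℝ (⊤ : ℕ∞) Y →
        PhiV a₁ a₂ b₁ b₂ (pfwdV φ X) (pfwdV φ Y)
          = pfwdV φ (PhiV a₁ a₂ b₁ b₂ X Y)) :
    ∃ c : ℝ, ∀ X Y : VF m, ContDiff ℝ (⊤ : ℕ∞) X → ContDiff ℝ (⊤ : ℕ∞) Y →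
      ∀ x i, PhiV a₁ a₂ b₁ b₂ X Y x i = c * lieB X Y x i := by
  have hm0 : NeZero m := ⟨by omega⟩
  have h10 : (1 : Fin m) ≠ 0 := by
    have h1 : ((1 : Fin m) : ℕ) = 1 := by
      rw [Fin.val_one']
      exact Nat.mod_eq_of_lt (by omega)
    intro h
    rw [h] at h1
    simp at h1
  -- the test point
  set xh : Pt m := fun _ => (1:ℝ) with hxh
  have hs : sq1 (1:ℝ) ≠ 0 := (sq1_pos 1).ne'
  -- test A : X = Y = e₀
  have EA := congrFun (congrFun (hnat (sF m) contDiff_sF contDiff_sF_symm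
      (fun _ => Pi.single 0 1) (fun _ => Pi.single 0 1) contDiff_const contDiff_const) xh) 0
  rw [pfwd_e0, PhiV_const] at EA
  rw [pfwd_zero] at EA
  simp only [PhiV, pd_Sfld, pd_const] at EA
  simp [Sfld, hxh, mul_ite, ite_mul, mul_zero, zero_mul, Finset.sum_ite_eq'] at EA
  -- test B : X = e₀, Y = e₁
  have EB := congrFun (congrFun (hnat (sF m) contDiff_sF contDiff_sF_symm
      (fun _ => Pi.single 0 1) (fun _ => Pi.single 1 1) contDiff_const contDiff_const) xh) 1
  rw [pfwd_e0, pfwd_e1 h10, PhiV_const] at EB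
  rw [pfwd_zero] at EB
  simp only [PhiV, pd_Sfld, pd_const] at EB
  simp [Sfld, hxh, Pi.single_apply, h10, pd_const, mul_ite, ite_mul, mul_zero, zero_mul, Finset.sum_ite_eq'] at EB
  -- test C : X = e₁, Y = e₀
  have EC := congrFun (congrFun (hnat (sF m) contDiff_sF contDiff_sF_symm
      (fun _ => Pi.single 1 1) (fun _ => Pi.single 0 1) contDiff_const contDiff_const) xh) 1
  rw [pfwd_e0, pfwd_e1 h10, PhiV_const] at EC
  rw [pfwd_zero] at EC
  simp only [PhiV, pd_Sfld, pd_const] at EC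
  simp [Sfld, hxh, Pi.single_apply, h10, pd_const, mul_ite, ite_mul, mul_zero, zero_mul, Finset.sum_ite_eq'] at EC
  have hb2 : b₂ = 0 := EB.resolve_right hs
  have ha2 : a₂ = 0 := EC.resolve_right hs
  have h1 : sq1 1 * (sq1 1)⁻¹ = 1 := mul_inv_cancel₀ hs
  rw [h1, ha2, hb2] at EA
  have hb1 : b₁ = -a₁ := by
    simp at EA
    linarith
  refine ⟨a₁, fun X Y _ _ x i => ?_⟩
  simp only [PhiV, lieB, ha2, hb2, zero_mul, mul_zero, add_zero, zero_add]
  rw [Finset.sum_sub_distrib, hb1]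
  ring
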